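/- If x̂ is the unique solution to the basis pursuit analysis problem minimize ‖Ψᵀx‖₁ subject to Φx = b, then Ker(Ψᵀ_{Iᶜ}) ∩ Ker(Φ) = {0}, where I = supp(Ψᵀx̂). -/

import Mathlib

open Matrix

/-- ℓ₁ norm of a finite real vector. -/
noncomputable def l1 {k : ℕ} (v : Fin k → ℝ) : ℝ := ∑ i, |v i|

/-- ℓ₂ (Euclidean) norm of a finite real vector. -/
noncomputable def l2 {k : ℕ} (v : Fin k → ℝ) : ℝ := Real.sqrt (∑ i, (v i) ^ 2)

/-- ℓ₁ norm of the subvector indexed by `S`. -/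
noncomputable def l1S {k : ℕ} (S : Finset (Fin k)) (v : Fin k → ℝ) : ℝ := ∑ i ∈ S, |v i|

/-- ℓ₂ norm of the subvector indexed by `S`. -/
noncomputable def l2S {k : ℕ} (S : Finset (Fin k)) (v : Fin k → ℝ) : ℝ :=
  Real.sqrt (∑ i ∈ S, (v i) ^ 2)

/-- ℓ∞ norm of the subvector indexed by `S` (0 if `S` is empty). -/
noncomputable def linfS {k : ℕ} (S : Finset (Fin k)) (v : Fin k → ℝ) : ℝ := ⨆ i ∈ S, |v i|

/-- uniqueness implies Ker(Ψᵀ_{Iᶜ}) ∩ Ker(Φ) = {0}. -/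
theorem stmt2 {m n l : ℕ} (Φ : Matrix (Fin m) (Fin n) ℝ) (Ψ : Matrix (Fin n) (Fin l) ℝ)
    (b : Fin m → ℝ) (xh : Fin n → ℝ) (hfeas : Φ.mulVec xh = b)
    (I : Finset (Fin l))
    (hI : I = Finset.univ.filter fun i => Ψ.transpose.mulVec xh i ≠ 0)
    (huniq : ∀ x : Fin n → ℝ, Φ.mulVec x = b → x ≠ xh →
      l1 (Ψ.transpose.mulVec xh) < l1 (Ψ.transpose.mulVec x)) :
    ∀ h : Fin n → ℝ, (∀ i ∈ Iᶜ, Ψ.transpose.mulVec h i = 0) → Φ.mulVec h = 0 → h = 0 := by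
  intro h hker hΦ
  by_contra hne
  set v : Fin l → ℝ := Ψ.transpose.mulVec xh with hv
  set w : Fin l → ℝ := Ψ.transpose.mulVec h with hw
  -- choose t > 0 with t * |w i| ≤ |v i| on I
  have hvI : ∀ i ∈ I, v i ≠ 0 := by
    intro i hi
    rw [hI, Finset.mem_filter] at hi
    exact hi.2
  set f : Fin l → ℝ := fun i => |v i| / (|w i| + 1) with hf
  set t : ℝ := if hI' : I.Nonempty then I.inf' hI' f else 1 with ht
  have hwpos : ∀ i : Fin l, (0:ℝ) < |w i| + 1 := fun i => by positivity
  have hfpos : ∀ i ∈ I, 0 < f i := by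
    intro i hi
    exact div_pos (abs_pos.mpr (hvI i hi)) (hwpos i)
  have htpos : 0 < t := by
    rw [ht]
    split_ifs with hI'
    · exact (Finset.lt_inf'_iff hI').mpr hfpos
    · norm_num
  have htle : ∀ i ∈ I, t * |w i| ≤ |v i| := by
    intro i hi
    have h1 : t ≤ f i := by
      rw [ht]
      rw [dif_pos ⟨i, hi⟩]
      exact Finset.inf'_le f hi
    have h2 : t * (|w i| + 1) ≤ f i * (|w i| + 1) :=
      mul_le_mul_of_nonneg_right h1 (le_of_lt (hwpos i))
    have h3 : f i * (|w i| + 1) = |v i| := by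
      simp only [hf]
      field_simp [(hwpos i).ne']
    nlinarith [abs_nonneg (w i), htpos]
  -- key pointwise identity
  have key : ∀ a c : ℝ, |c| ≤ |a| → |a + c| + |a - c| = 2 * |a| := by
    intro a c hc
    rcases abs_cases a with ⟨ha, _⟩ | ⟨ha, _⟩ <;>
    rcases abs_cases (a + c) with ⟨h1, _⟩ | ⟨h1, _⟩ <;>
    rcases abs_cases (a - c) with ⟨h2, _⟩ | ⟨h2, _⟩ <;>
    rcases abs_cases c with ⟨h3, _⟩ | ⟨h3, _⟩ <;>
    linarith
  -- the two feasible points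
  have hmul : ∀ s : ℝ, Ψ.transpose.mulVec (xh + s • h) = v + s • w := by
    intro s
    rw [Matrix.mulVec_add, Matrix.mulVec_smul]
  have hfeas' : ∀ s : ℝ, Φ.mulVec (xh + s • h) = b := by
    intro s
    rw [Matrix.mulVec_add, Matrix.mulVec_smul, hΦ, hfeas]
    simp
  have hne' : ∀ s : ℝ, s ≠ 0 → xh + s • h ≠ xh := by
    intro s hs hcontra
    apply hne
    have : s • h = 0 := by
      have := congrArg (fun z => z - xh) hcontra
      simpa [add_sub_cancel_left] using this
    exact (smul_eq_zero.mp this).resolve_left hs |>.symm ▸ rfl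
  have h1 := huniq (xh + t • h) (hfeas' t) (hne' t (ne_of_gt htpos))
  have h2 := huniq (xh + (-t) • h) (hfeas' (-t)) (hne' (-t) (by linarith))
  rw [hmul] at h1 h2
  have hsum : l1 (v + t • w) + l1 (v + (-t) • w) = 2 * l1 v := by
    simp only [l1, ← Finset.sum_add_distrib, Finset.mul_sum]
    apply Finset.sum_congr rfl
    intro i _
    by_cases hi : i ∈ I
    · have := key (v i) (t * w i) (by
        rw [abs_mul, abs_of_pos htpos]; exact htle i hi)
      simpa [Pi.add_apply, Pi.smul_apply, smul_eq_mul, sub_eq_add_neg, neg_mul,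
        mul_comm] using this
    · have hwi : w i = 0 := hker i (Finset.mem_compl.mpr hi)
      simp [hwi, two_mul]
  rw [hv] at h1 h2
  linarith
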